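/- The set of odd roots α of pe(n) with (ζ_x, α) > 0, for x = (μ, ν) ∈ BRP^{00}_n with p = ℓ(μ) and n − p = ℓ(ν), equals the disjoint union over 1 ≤ i ≤ p of {ε_i + ε_j : i ≤ j ≤ μ_i + i − 1} together with the disjoint union over 1 ≤ k ≤ n − p of {−ε_{n+1−l} − ε_{n+1−k} : k < l ≤ ν_k + k − 1}. -/
import Mathlib


/-- The basis vector `ε_i` (1-indexed) of the weight lattice, as a function `ℕ → ℤ`. -/
def eps (i : ℕ) : ℕ → ℤ := fun k => if k = i then 1 else 0

/-- The odd roots of `pe(n)`: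
`{ε_i + ε_j : 1 ≤ i ≤ j ≤ n} ∪ {-ε_i - ε_j : 1 ≤ i < j ≤ n}`. -/
def OddRoots (n : ℕ) : Set (ℕ → ℤ) :=
  {α | ∃ i j, 1 ≤ i ∧ i ≤ j ∧ j ≤ n ∧ α = eps i + eps j} ∪
  {α | ∃ i j, 1 ≤ i ∧ i < j ∧ j ≤ n ∧ α = -eps i - eps j}

/-- The standard bilinear form `(ζ, α) = Σ_{k=1}^n ζ_k α_k`. -/
def pairing (n : ℕ) (ζ α : ℕ → ℤ) : ℤ := ∑ k ∈ Finset.Icc 1 n, ζ k * α k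

/-- The weight `ζ_x = Σ_i μ_i ε_i − Σ_j ν_j ε_{n+1−j}` attached to a bipartition
`x = (μ, ν)` with `ℓ(μ) = p` (partitions given as 1-indexed sequences of parts). -/
def zetaWt (n p : ℕ) (μ ν : ℕ → ℕ) : ℕ → ℤ :=
  fun k => if k ≤ p then (μ k : ℤ) else -(ν (n + 1 - k) : ℤ)

/- ### Auxiliary lemmas -/

lemma pairing_addf (n : ℕ) (ζ α β : ℕ → ℤ) :
    pairing n ζ (α + β) = pairing n ζ α + pairing n ζ β := by
  unfold pairing
  rw [← Finset.sum_add_distrib]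
  exact Finset.sum_congr rfl fun k _ => by simp [mul_add]

lemma pairing_negf (n : ℕ) (ζ α : ℕ → ℤ) :
    pairing n ζ (-α) = -pairing n ζ α := by
  unfold pairing
  rw [← Finset.sum_neg_distrib]
  exact Finset.sum_congr rfl fun k _ => by simp

lemma pairing_eps (n : ℕ) (ζ : ℕ → ℤ) (i : ℕ) (hi1 : 1 ≤ i) (hin : i ≤ n) :
    pairing n ζ (eps i) = ζ i := by
  unfold pairing eps
  simp only [mul_ite, mul_one, mul_zero]
  rw [Finset.sum_ite_eq' (Finset.Icc 1 n) i ζ]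
  simp [Finset.mem_Icc, hi1, hin]

lemma pairing_eps_add (n : ℕ) (ζ : ℕ → ℤ) (i j : ℕ) (hi1 : 1 ≤ i) (hin : i ≤ n)
    (hj1 : 1 ≤ j) (hjn : j ≤ n) :
    pairing n ζ (eps i + eps j) = ζ i + ζ j := by
  rw [pairing_addf, pairing_eps n ζ i hi1 hin, pairing_eps n ζ j hj1 hjn]

lemma pairing_eps_neg (n : ℕ) (ζ : ℕ → ℤ) (i j : ℕ) (hi1 : 1 ≤ i) (hin : i ≤ n)
    (hj1 : 1 ≤ j) (hjn : j ≤ n) :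
    pairing n ζ (-eps i - eps j) = -(ζ i + ζ j) := by
  rw [sub_eq_add_neg, pairing_addf, pairing_negf, pairing_negf,
    pairing_eps n ζ i hi1 hin, pairing_eps n ζ j hj1 hjn]
  ring

lemma anti_aux (μ : ℕ → ℕ) (hdec : ∀ i, 1 ≤ i → μ (i + 1) ≤ μ i)
    {i j : ℕ} (h1 : 1 ≤ i) (hij : i ≤ j) : μ j ≤ μ i := by
  induction hij with
  | refl => exact le_rfl
  | @step m h ih => exact le_trans (hdec m (le_trans h1 h)) ih

lemma strict_sum (p : ℕ) (μ : ℕ → ℕ)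
    (hdec : ∀ i, 1 ≤ i → μ (i + 1) ≤ μ i)
    (hinj : ∀ i, 1 ≤ i → i ≤ p → ∀ j, 1 ≤ j → j ≤ p → μ i = μ j → i = j) :
    ∀ d i, 1 ≤ i → i + d ≤ p → μ (i + d) + d ≤ μ i := by
  intro d
  induction d with
  | zero => intro i _ _; simp
  | succ e ih =>
    intro i h1 hp
    have h2 : μ (i + e + 1) ≤ μ (i + e) := hdec _ (by omega)
    have h3 : μ (i + e + 1) ≠ μ (i + e) := fun h => by
      have := hinj _ (by omega) (by omega) _ (by omega) (by omega) h; omega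
    have h4 := ih i h1 (by omega)
    have h5 : i + (e + 1) = i + e + 1 := by omega
    rw [h5]; omega

lemma inj_of (n p q : ℕ) (μ ν : ℕ → ℕ)
    (hstair : ((Finset.Icc 1 p).val.map μ) + ((Finset.Icc 1 q).val.map ν)
      = (Finset.Icc 1 n).val) :
    ∀ i, 1 ≤ i → i ≤ p → ∀ j, 1 ≤ j → j ≤ p → μ i = μ j → i = j := by
  have hnd : (((Finset.Icc 1 p).val.map μ) + ((Finset.Icc 1 q).val.map ν)).Nodup := by
    rw [hstair]; exact (Finset.Icc 1 n).nodup
  rw [Multiset.nodup_add] at hnd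
  intro i hi1 hip j hj1 hjp h
  exact Multiset.inj_on_of_nodup_map hnd.1 i
    (by rw [Finset.mem_val, Finset.mem_Icc]; omega) j
    (by rw [Finset.mem_val, Finset.mem_Icc]; omega) h

lemma ne_of (n p q : ℕ) (μ ν : ℕ → ℕ)
    (hstair : ((Finset.Icc 1 p).val.map μ) + ((Finset.Icc 1 q).val.map ν)
      = (Finset.Icc 1 n).val)
    (i k : ℕ) (hi1 : 1 ≤ i) (hip : i ≤ p) (hk1 : 1 ≤ k) (hkq : k ≤ q) :
    μ i ≠ ν k := by
  have hnd : (((Finset.Icc 1 p).val.map μ) + ((Finset.Icc 1 q).val.map ν)).Nodup := by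
    rw [hstair]; exact (Finset.Icc 1 n).nodup
  rw [Multiset.nodup_add] at hnd
  intro h
  have hm : μ i ∈ (Finset.Icc 1 p).val.map μ :=
    Multiset.mem_map_of_mem μ (by rw [Finset.mem_val, Finset.mem_Icc]; omega)
  have hm2 : μ i ∈ (Finset.Icc 1 q).val.map ν := by
    rw [h]; exact Multiset.mem_map_of_mem ν (by rw [Finset.mem_val, Finset.mem_Icc]; omega)
  exact Multiset.disjoint_left.mp hnd.2.2 hm hm2

lemma bound_of (n p q : ℕ) (μ ν : ℕ → ℕ)
    (hdec : ∀ i, 1 ≤ i → μ (i + 1) ≤ μ i)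
    (hstair : ((Finset.Icc 1 p).val.map μ) + ((Finset.Icc 1 q).val.map ν)
      = (Finset.Icc 1 n).val)
    (i : ℕ) (hi1 : 1 ≤ i) (hip : i ≤ p) : μ i + i ≤ n + 1 := by
  have h1 : μ 1 ≤ n := by
    have hm : μ 1 ∈ (Finset.Icc 1 n).val := by
      rw [← hstair]
      exact Multiset.mem_add.mpr (Or.inl
        (Multiset.mem_map_of_mem μ (by rw [Finset.mem_val, Finset.mem_Icc]; omega)))
    rw [Finset.mem_val, Finset.mem_Icc] at hm
    exact hm.2
  have h2 := strict_sum p μ hdec (inj_of n p q μ ν hstair) (i - 1) 1 le_rfl (by omega)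
  have h3 : 1 + (i - 1) = i := by omega
  rw [h3] at h2
  omega

lemma memiff (q : ℕ) (ν : ℕ → ℕ) (hdec : ∀ i, 1 ≤ i → ν (i + 1) ≤ ν i)
    (v k : ℕ) (hk1 : 1 ≤ k) (hkq : k ≤ q) :
    v < ν k ↔ k ≤ ((Finset.Icc 1 q).filter (fun j => v < ν j)).card := by
  constructor
  · intro h
    have hsub : Finset.Icc 1 k ⊆ (Finset.Icc 1 q).filter (fun j => v < ν j) := by
      intro x hx
      rw [Finset.mem_Icc] at hx
      rw [Finset.mem_filter, Finset.mem_Icc]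
      exact ⟨⟨hx.1, by omega⟩, lt_of_lt_of_le h (anti_aux ν hdec hx.1 hx.2)⟩
    have hc := Finset.card_le_card hsub
    rw [Nat.card_Icc] at hc
    omega
  · intro h
    by_contra hc
    push_neg at hc
    have hsub : (Finset.Icc 1 q).filter (fun j => v < ν j) ⊆ Finset.Icc 1 (k - 1) := by
      intro x hx
      rw [Finset.mem_filter, Finset.mem_Icc] at hx
      rw [Finset.mem_Icc]
      refine ⟨hx.1.1, ?_⟩
      by_contra hx2
      push_neg at hx2
      have := anti_aux ν hdec hk1 (show k ≤ x by omega)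
      omega
    have := Finset.card_le_card hsub
    rw [Nat.card_Icc] at this
    omega

lemma count_aux (n p q : ℕ) (μ ν : ℕ → ℕ)
    (hstair : ((Finset.Icc 1 p).val.map μ) + ((Finset.Icc 1 q).val.map ν)
      = (Finset.Icc 1 n).val) (v : ℕ) :
    ((Finset.Icc 1 p).filter (fun i => v < μ i)).card
      + ((Finset.Icc 1 q).filter (fun k => v < ν k)).card = n - v := by
  have h := congrArg (Multiset.countP (fun x => v < x)) hstair
  rw [Multiset.countP_add, Multiset.countP_map, Multiset.countP_map] at h
  have e1 : ∀ (m : ℕ) (f : ℕ → ℕ),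
      ((Finset.Icc 1 m).filter (fun i => v < f i)).card
        = Multiset.card (Multiset.filter (fun a => v < f a) (Finset.Icc 1 m).val) := by
    intro m f
    rw [Finset.card_def, Finset.filter_val]
  have e2 : Multiset.countP (fun x => v < x) (Finset.Icc 1 n).val
      = ((Finset.Icc 1 n).filter (fun x => v < x)).card := by
    rw [Multiset.countP_eq_card_filter, Finset.card_def, Finset.filter_val]
  rw [e1, e1, h, e2]
  have e3 : (Finset.Icc 1 n).filter (fun x => v < x) = Finset.Icc (v + 1) n := by
    ext x
    rw [Finset.mem_filter, Finset.mem_Icc, Finset.mem_Icc]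
    omega
  rw [e3, Nat.card_Icc]
  omega

lemma key (n p q : ℕ) (hpq : p + q = n) (μ ν : ℕ → ℕ)
    (hμdec : ∀ i, 1 ≤ i → μ (i + 1) ≤ μ i)
    (hνdec : ∀ j, 1 ≤ j → ν (j + 1) ≤ ν j)
    (hstair : ((Finset.Icc 1 p).val.map μ) + ((Finset.Icc 1 q).val.map ν)
      = (Finset.Icc 1 n).val)
    (i k : ℕ) (hi1 : 1 ≤ i) (hip : i ≤ p) (hk1 : 1 ≤ k) (hkq : k ≤ q) :
    ν k < μ i ↔ n + 2 ≤ μ i + i + k := by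
  have hinj := inj_of n p q μ ν hstair
  have hbd := bound_of n p q μ ν hμdec hstair i hi1 hip
  have hA := count_aux n p q μ ν hstair (μ i)
  have hFμ : (Finset.Icc 1 p).filter (fun i' => μ i < μ i') = Finset.Icc 1 (i - 1) := by
    ext x
    rw [Finset.mem_filter, Finset.mem_Icc, Finset.mem_Icc]
    constructor
    · rintro ⟨⟨hx1, hxp⟩, hvx⟩
      refine ⟨hx1, ?_⟩
      by_contra h
      push_neg at h
      have := anti_aux μ hμdec hi1 (show i ≤ x by omega)
      omega
    · rintro ⟨hx1, hxi⟩
      refine ⟨⟨hx1, by omega⟩, ?_⟩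
      have hs := strict_sum p μ hμdec hinj (i - x) x hx1 (by omega)
      have hxe : x + (i - x) = i := by omega
      rw [hxe] at hs
      omega
  rw [hFμ, Nat.card_Icc] at hA
  have hiff := memiff q ν hνdec (μ i) k hk1 hkq
  have hne := ne_of n p q μ ν hstair i k hi1 hip hk1 hkq
  omega

/-- For `x = (μ, ν) ∈ BRP⁰⁰ₙ` with `p = ℓ(μ)` and `q = n − p = ℓ(ν)`, the set of odd
roots `α` of `pe(n)` with `(ζ_x, α) > 0` equals the union over `1 ≤ i ≤ p` of
`{ε_i + ε_j : i ≤ j ≤ μ_i + i − 1}` with the union over `1 ≤ k ≤ n − p` of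
`{−ε_{n+1−l} − ε_{n+1−k} : k < l ≤ ν_k + k − 1}`. -/
theorem stmt10 (n p q : ℕ) (hpq : p + q = n) (μ ν : ℕ → ℕ)
    (hμpos : ∀ i, 1 ≤ i → i ≤ p → 0 < μ i) (hμ0 : ∀ i, p < i → μ i = 0)
    (hμdec : ∀ i, 1 ≤ i → μ (i + 1) ≤ μ i)
    (hνpos : ∀ j, 1 ≤ j → j ≤ q → 0 < ν j) (hν0 : ∀ j, q < j → ν j = 0)
    (hνdec : ∀ j, 1 ≤ j → ν (j + 1) ≤ ν j)
    (hstair : ((Finset.Icc 1 p).val.map μ) + ((Finset.Icc 1 q).val.map ν)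
      = (Finset.Icc 1 n).val) :
    {α | α ∈ OddRoots n ∧ 0 < pairing n (zetaWt n p μ ν) α} =
      {α | ∃ i j, 1 ≤ i ∧ i ≤ p ∧ i ≤ j ∧ j + 1 ≤ μ i + i ∧ α = eps i + eps j} ∪
      {α | ∃ k l, 1 ≤ k ∧ k ≤ q ∧ k < l ∧ l + 1 ≤ ν k + k ∧
        α = -eps (n + 1 - l) - eps (n + 1 - k)} := by
  have hstair' : ((Finset.Icc 1 q).val.map ν) + ((Finset.Icc 1 p).val.map μ)
      = (Finset.Icc 1 n).val := by rw [add_comm]; exact hstair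
  have hpq' : q + p = n := by omega
  have hkey := key n p q hpq μ ν hμdec hνdec hstair
  have hkey' := key n q p hpq' ν μ hνdec hμdec hstair'
  have hinjμ := inj_of n p q μ ν hstair
  have hinjν := inj_of n q p ν μ hstair'
  have hbdμ := fun i hi1 hip => bound_of n p q μ ν hμdec hstair i hi1 hip
  have hbdν := fun k hk1 hkq => bound_of n q p ν μ hνdec hstair' k hk1 hkq
  have hζle : ∀ k, k ≤ p → zetaWt n p μ ν k = (μ k : ℤ) := by
    intro k h; simp [zetaWt, h]
  have hζgt : ∀ k, p < k → zetaWt n p μ ν k = -(ν (n + 1 - k) : ℤ) := by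
    intro k h; simp only [zetaWt]; rw [if_neg (by omega)]
  ext α
  simp only [Set.mem_setOf_eq, Set.mem_union, OddRoots]
  constructor
  · rintro ⟨hroot, hpos⟩
    rcases hroot with ⟨i, j, hi1, hij, hjn, rfl⟩ | ⟨i, j, hi1, hij, hjn, rfl⟩
    · rw [pairing_eps_add n _ i j hi1 (by omega) (by omega) hjn] at hpos
      by_cases hip : i ≤ p
      · left
        refine ⟨i, j, hi1, hip, hij, ?_, rfl⟩
        by_cases hjp : j ≤ p
        · have hs := strict_sum p μ hμdec hinjμ (j - i) i hi1 (by omega)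
          have hxe : i + (j - i) = j := by omega
          rw [hxe] at hs
          have := hμpos j (by omega) hjp
          omega
        · push_neg at hjp
          rw [hζle i hip, hζgt j hjp] at hpos
          have h2 : ν (n + 1 - j) < μ i := by omega
          have := (hkey i (n + 1 - j) hi1 hip (by omega) (by omega)).mp h2
          omega
      · push_neg at hip
        exfalso
        rw [hζgt i hip, hζgt j (by omega)] at hpos
        have h1 := hνpos (n + 1 - i) (by omega) (by omega)
        have h2 := hνpos (n + 1 - j) (by omega) (by omega)
        omega
    · rw [pairing_eps_neg n _ i j hi1 (by omega) (by omega) hjn] at hpos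
      by_cases hjp : j ≤ p
      · exfalso
        rw [hζle i (by omega), hζle j hjp] at hpos
        have h1 := hμpos i hi1 (by omega)
        have h2 := hμpos j (by omega) hjp
        omega
      · push_neg at hjp
        right
        rw [hζgt j hjp] at hpos
        refine ⟨n + 1 - j, n + 1 - i, by omega, by omega, by omega, ?_, ?_⟩
        · by_cases hip : i ≤ p
          · rw [hζle i hip] at hpos
            have h2 : μ i < ν (n + 1 - j) := by omega
            have := (hkey' (n + 1 - j) i (by omega) (by omega) hi1 hip).mp h2
            omega
          · push_neg at hip
            rw [hζgt i hip] at hpos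
            have hs := strict_sum q ν hνdec hinjν ((n + 1 - i) - (n + 1 - j))
              (n + 1 - j) (by omega) (by omega)
            have he : (n + 1 - j) + ((n + 1 - i) - (n + 1 - j)) = n + 1 - i := by omega
            rw [he] at hs
            have := hνpos (n + 1 - i) (by omega) (by omega)
            omega
        · rw [show n + 1 - (n + 1 - i) = i by omega, show n + 1 - (n + 1 - j) = j by omega]
  · rintro (⟨i, j, hi1, hip, hij, hjb, rfl⟩ | ⟨k, l, hk1, hkq, hkl, hlb, rfl⟩)
    · have hbd := hbdμ i hi1 hip
      have hjn : j ≤ n := by omega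
      refine ⟨Or.inl ⟨i, j, hi1, hij, hjn, rfl⟩, ?_⟩
      rw [pairing_eps_add n _ i j hi1 (by omega) (by omega) hjn]
      by_cases hjp : j ≤ p
      · rw [hζle i hip, hζle j hjp]
        have h1 := hμpos i hi1 hip
        have h2 := hμpos j (by omega) hjp
        omega
      · push_neg at hjp
        rw [hζle i hip, hζgt j hjp]
        have h2 := (hkey i (n + 1 - j) hi1 hip (by omega) (by omega)).mpr (by omega)
        omega
    · have hbd := hbdν k hk1 hkq
      have hln : l ≤ n := by omega
      refine ⟨Or.inr ⟨n + 1 - l, n + 1 - k, by omega, by omega, by omega, rfl⟩, ?_⟩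
      rw [pairing_eps_neg n _ (n + 1 - l) (n + 1 - k) (by omega) (by omega)
        (by omega) (by omega)]
      have hjp : p < n + 1 - k := by omega
      rw [hζgt (n + 1 - k) hjp, show n + 1 - (n + 1 - k) = k by omega]
      by_cases hip : n + 1 - l ≤ p
      · rw [hζle (n + 1 - l) hip]
        have h2 := (hkey' k (n + 1 - l) hk1 hkq (by omega) hip).mpr (by omega)
        omega
      · push_neg at hip
        rw [hζgt (n + 1 - l) hip, show n + 1 - (n + 1 - l) = l by omega]
        have h1 := hνpos k hk1 hkq
        have h2 := hνpos l (by omega) (by omega)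
        omega
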